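/- Fix an ordering c_1, …, c_k of the colors. For 1 ≤ i ≤ k let M_i = max{ y(p) : f(p) ∈ {c_1, …, c_{i−1}} and x_l(c_i) ≤ x(p) ≤ x_r(c_i) }, where M_i is taken to be (min_{p ∈ P} y(p)) − 1 if no such point exists. For δ > 0 define recursively g_0 = (min_{p ∈ P} y(p)) − 1 and g_i = max(g_{i−1}, M_i) + δ, and let the greedy realization be y(c_i) = g_i. Then there exist δ_0 > 0 and a finite set Δ ⊂ ℝ such that for every δ ∈ (0, δ_0) \ Δ: a planar bus realization with y(c_1) < y(c_2) < … < y(c_k) exists if and only if the greedy realization is planar. -/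

import Mathlib

open Set

/-- A colored point set: a finite set of points `P` with coordinates `x p`, `y p`
and colors `f p` in a finite color set `C`; the color map is surjective and no
two points share an x-coordinate or a y-coordinate. -/
structure CPS (P C : Type) [Fintype P] [Fintype C] where
  x : P → ℝ
  y : P → ℝ
  f : P → C
  f_surj : Function.Surjective f
  x_inj : Function.Injective x
  y_inj : Function.Injective y

variable {P C : Type} [Fintype P] [Fintype C]

/-- Left end `x_l(c)` of the span of color `c`. -/
noncomputable def xl (S : CPS P C) (c : C) : ℝ :=
  sInf (S.x '' {p | S.f p = c})

/-- Right end `x_r(c)` of the span of color `c`. -/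
noncomputable def xr (S : CPS P C) (c : C) : ℝ :=
  sSup (S.x '' {p | S.f p = c})

/-- The bus of color `c`: the horizontal segment at height `Y c` over the span of `c`. -/
def busSeg (S : CPS P C) (Y : C → ℝ) (c : C) : Set (ℝ × ℝ) :=
  {q | q.2 = Y c ∧ q.1 ∈ Icc (xl S c) (xr S c)}

/-- The connection segment of point `p`: the vertical segment from `p` to its bus. -/
def connSeg (S : CPS P C) (Y : C → ℝ) (p : P) : Set (ℝ × ℝ) :=
  {q | q.1 = S.x p ∧ q.2 ∈ uIcc (S.y p) (Y (S.f p))}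

/-- Planarity of a bus realization `Y`: no bus contains a point of a different
color, no bus intersects the connection segment of a point of a different color,
and no two connection segments of points of different colors intersect. -/
def PlanarBus (S : CPS P C) (Y : C → ℝ) : Prop :=
  (∀ (c : C) (p : P), S.f p ≠ c → (S.x p, S.y p) ∉ busSeg S Y c) ∧
  (∀ (c : C) (p : P), S.f p ≠ c → Disjoint (busSeg S Y c) (connSeg S Y p)) ∧
  (∀ p q : P, S.f p ≠ S.f q → Disjoint (connSeg S Y p) (connSeg S Y q))

/-- correctness of the greedy realization. Given an ordering
`e 0, …, e (k-1)` of the colors, the values `M i` and the greedy heights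
`g δ (i+1)` as in the statement, there exist `δ₀ > 0` and a finite exception
set `Δ` such that for every `δ ∈ (0, δ₀) \ Δ`, a planar bus realization with
increasing bus order exists iff the greedy realization is a planar bus
realization. -/
theorem stmt3 {P C : Type} [Fintype P] [Fintype C] [Nonempty P] (S : CPS P C)
    {k : ℕ} (e : Fin k ≃ C)
    (ymin : ℝ) (hymin : ymin = sInf (Set.range S.y))
    (M : Fin k → ℝ)
    (hM : ∀ i : Fin k, M i = sSup (insert (ymin - 1)
      (S.y '' {p | (∃ j : Fin k, j < i ∧ S.f p = e j) ∧
        xl S (e i) ≤ S.x p ∧ S.x p ≤ xr S (e i)})))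
    (g : ℝ → ℕ → ℝ)
    (hg0 : ∀ δ : ℝ, g δ 0 = ymin - 1)
    (hgs : ∀ (δ : ℝ) (i : ℕ) (h : i < k), g δ (i + 1) = max (g δ i) (M ⟨i, h⟩) + δ) :
    ∃ δ₀ > (0 : ℝ), ∃ Δ : Finset ℝ, ∀ δ : ℝ, 0 < δ → δ < δ₀ → δ ∉ Δ →
      ((∃ Y : C → ℝ, Function.Injective Y ∧ PlanarBus S Y ∧
          StrictMono (fun i : Fin k => Y (e i))) ↔
        (Function.Injective (fun c : C => g δ ((e.symm c : ℕ) + 1)) ∧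
          PlanarBus S (fun c : C => g δ ((e.symm c : ℕ) + 1)))) := by

  classical
  have hk : 0 < k := (e.symm (S.f (Classical.arbitrary P))).pos
  have hyple : ∀ p : P, ymin ≤ S.y p := fun p => by
    rw [hymin]; exact csInf_le (Set.finite_range S.y).bddBelow ⟨p, rfl⟩
  have hMmem : ∀ i : Fin k, M i = ymin - 1 ∨ ∃ q : P,
      (∃ j : Fin k, j < i ∧ S.f q = e j) ∧ xl S (e i) ≤ S.x q ∧ S.x q ≤ xr S (e i) ∧
        M i = S.y q := by
    intro i
    have hmem : M i ∈ insert (ymin - 1) (S.y '' {p | (∃ j : Fin k, j < i ∧ S.f p = e j) ∧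
        xl S (e i) ≤ S.x p ∧ S.x p ≤ xr S (e i)}) := by
      rw [hM i]
      exact (Set.insert_nonempty _ _).csSup_mem (Set.toFinite _)
    rcases hmem with h | ⟨q, hq, hyq⟩
    · exact Or.inl h
    · exact Or.inr ⟨q, hq.1, hq.2.1, hq.2.2, hyq.symm⟩
  have hMge : ∀ (i : Fin k) (p : P), (∃ j : Fin k, j < i ∧ S.f p = e j) →
      xl S (e i) ≤ S.x p → S.x p ≤ xr S (e i) → S.y p ≤ M i := by
    intro i p hj h1 h2
    rw [hM i]
    exact le_csSup (Set.toFinite _).bddAbove (Set.mem_insert_of_mem _ ⟨p, ⟨hj, h1, h2⟩, rfl⟩)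
  have hstep : ∀ (δ : ℝ) (m : ℕ) (h : m < k),
      g δ m + δ ≤ g δ (m + 1) ∧ M ⟨m, h⟩ + δ ≤ g δ (m + 1) := by
    intro δ m h
    rw [hgs δ m h]
    exact ⟨by linarith [le_max_left (g δ m) (M ⟨m, h⟩)],
      by linarith [le_max_right (g δ m) (M ⟨m, h⟩)]⟩
  have hmono : ∀ (δ : ℝ), 0 < δ → ∀ n, n ≤ k → ∀ m, m < n → g δ m < g δ n := by
    intro δ hδ n
    induction n with
    | zero => intro _ m hm; omega
    | succ n ih =>
      intro hnk m hm
      have hn : n < k := by omega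
      have h1 : g δ n < g δ (n + 1) := by have := (hstep δ n hn).1; linarith
      rcases Nat.lt_succ_iff_lt_or_eq.mp hm with h | h
      · exact lt_trans (ih (by omega) m h) h1
      · rw [h]; exact h1
  have hub : ∀ (δ : ℝ), 0 ≤ δ → ∀ n, n ≤ k → g δ n ≤ g 0 n + n * δ := by
    intro δ hδ n
    induction n with
    | zero => intro _; simp [hg0]
    | succ n ih =>
      intro hnk
      have hn : n < k := by omega
      have h1 := ih (by omega)
      rw [hgs δ n hn, hgs 0 n hn]
      have h2 : max (g δ n) (M ⟨n, hn⟩) ≤ max (g 0 n) (M ⟨n, hn⟩) + n * δ :=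
        max_le (le_trans h1 (add_le_add (le_max_left _ _) le_rfl))
          (le_trans (le_max_right _ _)
            (le_add_of_nonneg_right (mul_nonneg (Nat.cast_nonneg n) hδ)))
      push_cast
      linarith
  have havoid : ∀ (Y : C → ℝ), PlanarBus S Y → ∀ (c : C) (p : P), S.f p ≠ c →
      xl S c ≤ S.x p → S.x p ≤ xr S c → Y c ∉ uIcc (S.y p) (Y (S.f p)) := by
    intro Y hpl c p hne h1 h2 hu
    have hb : ((S.x p, Y c) : ℝ × ℝ) ∈ busSeg S Y c := ⟨rfl, h1, h2⟩
    have hc : ((S.x p, Y c) : ℝ × ℝ) ∈ connSeg S Y p := ⟨rfl, hu⟩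
    exact Set.disjoint_left.mp (hpl.2.1 c p hne) hb hc
  have hbelow : ∀ (Y : C → ℝ), PlanarBus S Y → StrictMono (fun i : Fin k => Y (e i)) →
      ∀ (i : Fin k) (p : P), e.symm (S.f p) < i → xl S (e i) ≤ S.x p → S.x p ≤ xr S (e i) →
      S.y p < Y (e i) := by
    intro Y hpl hs i p hji h1 h2
    have hne : S.f p ≠ e i := by
      intro h; rw [h, Equiv.symm_apply_apply] at hji; exact lt_irrefl _ hji
    have hav := havoid Y hpl (e i) p hne h1 h2
    have hYlt : Y (S.f p) < Y (e i) := by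
      have := hs hji
      simpa using this
    by_contra hcon
    push_neg at hcon
    exact hav (Set.mem_uIcc.mpr (Or.inr ⟨hYlt.le, hcon⟩))
  have habove : ∀ (Y : C → ℝ), PlanarBus S Y → StrictMono (fun i : Fin k => Y (e i)) →
      ∀ (i : Fin k) (p : P), i < e.symm (S.f p) → xl S (e i) ≤ S.x p → S.x p ≤ xr S (e i) →
      Y (e i) < S.y p := by
    intro Y hpl hs i p hij h1 h2
    have hne : S.f p ≠ e i := by
      intro h; rw [h, Equiv.symm_apply_apply] at hij; exact lt_irrefl _ hij
    have hav := havoid Y hpl (e i) p hne h1 h2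
    have hYlt : Y (e i) < Y (S.f p) := by
      have := hs hij
      simpa using this
    by_contra hcon
    push_neg at hcon
    exact hav (Set.mem_uIcc.mpr (Or.inl ⟨hcon, hYlt.le⟩))
  have hA : ∀ (Y : C → ℝ), PlanarBus S Y → StrictMono (fun i : Fin k => Y (e i)) →
      ∀ (i : Fin k) (p : P), i < e.symm (S.f p) → xl S (e i) ≤ S.x p → S.x p ≤ xr S (e i) →
      g 0 (↑i + 1) < S.y p := by
    intro Y hpl hs i p hij h1 h2
    have hYp : Y (e i) < S.y p := habove Y hpl hs i p hij h1 h2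
    have key : ∀ n : ℕ, n ≤ ↑i + 1 → g 0 n < S.y p := by
      intro n
      induction n with
      | zero => intro _; rw [hg0]; have := hyple p; linarith
      | succ m ih =>
        intro hm
        have hmk : m < k := by have := i.isLt; omega
        rw [hgs 0 m hmk]
        have hg1 : g 0 m < S.y p := ih (by omega)
        have hg2 : M ⟨m, hmk⟩ < S.y p := by
          rcases hMmem ⟨m, hmk⟩ with h | ⟨q, hq1, hq2, hq3, hq4⟩
          · rw [h]; have := hyple p; linarith
          · rw [hq4]
            have hq5 : e.symm (S.f q) < (⟨m, hmk⟩ : Fin k) := by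
              obtain ⟨j, hj1, hj2⟩ := hq1
              rw [hj2, Equiv.symm_apply_apply]; exact hj1
            have h6 : S.y q < Y (e ⟨m, hmk⟩) := hbelow Y hpl hs ⟨m, hmk⟩ q hq5 hq2 hq3
            have h7 : Y (e ⟨m, hmk⟩) ≤ Y (e i) := by
              have hle : (⟨m, hmk⟩ : Fin k) ≤ i := by
                rw [Fin.le_def]; simp; omega
              exact hs.monotone hle
            linarith
        have := max_lt hg1 hg2
        linarith
    exact key (↑i + 1) le_rfl
  set T : Finset ℝ := insert 1 (((Finset.univ : Finset (Fin k × P)).filter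
      (fun ip => 0 < S.y ip.2 - g 0 (↑ip.1 + 1))).image
      (fun ip => (S.y ip.2 - g 0 (↑ip.1 + 1)) / k)) with hT
  have hTne : T.Nonempty := Finset.insert_nonempty _ _
  refine ⟨T.min' hTne, ?_, ∅, ?_⟩
  · rw [gt_iff_lt, Finset.lt_min'_iff]
    intro b hb
    rcases Finset.mem_insert.mp hb with rfl | hb
    · exact one_pos
    · obtain ⟨ip, hip, rfl⟩ := Finset.mem_image.mp hb
      exact div_pos (Finset.mem_filter.mp hip).2 (Nat.cast_pos.mpr hk)
  intro δ hδ hδ₀ _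
  have hmono' : ∀ (a b : Fin k), a < b → g δ (↑a + 1) < g δ (↑b + 1) := fun a b h =>
    hmono δ hδ (↑b + 1) b.isLt (↑a + 1) (Nat.succ_lt_succ h)
  have hgt : ∀ (i : Fin k) (p : P), e.symm (S.f p) < i → xl S (e i) ≤ S.x p →
      S.x p ≤ xr S (e i) → S.y p < g δ (↑i + 1) := by
    intro i p hji h1 h2
    have hMp : S.y p ≤ M i :=
      hMge i p ⟨e.symm (S.f p), hji, (e.apply_symm_apply (S.f p)).symm⟩ h1 h2
    have hst := (hstep δ ↑i i.isLt).2
    simp only [Fin.eta] at hst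
    linarith
  constructor
  · rintro ⟨Y, hYinj, hYpl, hYs⟩
    have hlt : ∀ (i : Fin k) (p : P), i < e.symm (S.f p) → xl S (e i) ≤ S.x p →
        S.x p ≤ xr S (e i) → g δ (↑i + 1) < S.y p := by
      intro i p hij h1 h2
      have h0 := hA Y hYpl hYs i p hij h1 h2
      have hmem : (S.y p - g 0 (↑i + 1)) / k ∈ T := by
        rw [hT]
        apply Finset.mem_insert_of_mem
        exact Finset.mem_image.mpr
          ⟨(i, p), Finset.mem_filter.mpr ⟨Finset.mem_univ _, by simpa using h0⟩, rfl⟩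
      have hle : T.min' hTne ≤ (S.y p - g 0 (↑i + 1)) / k := Finset.min'_le _ _ hmem
      have hkpos : (0 : ℝ) < k := Nat.cast_pos.mpr hk
      have hδk : (k : ℝ) * δ < S.y p - g 0 (↑i + 1) := by
        have hlt2 : δ < (S.y p - g 0 (↑i + 1)) / k := lt_of_lt_of_le hδ₀ hle
        calc (k : ℝ) * δ < (k : ℝ) * ((S.y p - g 0 (↑i + 1)) / k) :=
              mul_lt_mul_of_pos_left hlt2 hkpos
          _ = S.y p - g 0 (↑i + 1) := mul_div_cancel₀ _ (ne_of_gt hkpos)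
      have hub' := hub δ hδ.le (↑i + 1) i.isLt
      have hik : ((↑i + 1 : ℕ) : ℝ) ≤ (k : ℝ) := by exact_mod_cast i.isLt
      have h9 : ((↑i + 1 : ℕ) : ℝ) * δ ≤ (k : ℝ) * δ :=
        mul_le_mul_of_nonneg_right hik hδ.le
      linarith
    refine ⟨?_, ?_, ?_, ?_⟩
    · intro c c' hcc
      by_contra hne
      have h1 : e.symm c ≠ e.symm c' := fun h => hne (by
        rw [← e.apply_symm_apply c, ← e.apply_symm_apply c', h])
      simp only at hcc
      rcases h1.lt_or_gt with h | h
      · exact absurd hcc (ne_of_lt (hmono' _ _ h))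
      · exact absurd hcc (ne_of_gt (hmono' _ _ h))
    · intro c p hne hbus
      simp only [busSeg, Set.mem_setOf_eq, Set.mem_Icc] at hbus
      obtain ⟨hb1, hb2⟩ := hbus
      have hfc : c = e (e.symm c) := (e.apply_symm_apply c).symm
      rw [hfc] at hb2
      have hne' : e.symm (S.f p) ≠ e.symm c := fun h => hne (by
        rw [← e.apply_symm_apply (S.f p), h, ← hfc])
      rcases hne'.lt_or_gt with h | h
      · exact absurd hb1 (ne_of_lt (hgt (e.symm c) p h hb2.1 hb2.2))
      · exact absurd hb1 (ne_of_gt (hlt (e.symm c) p h hb2.1 hb2.2))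
    · intro c p hne
      rw [Set.disjoint_left]
      rintro a ha hb
      simp only [busSeg, Set.mem_setOf_eq, Set.mem_Icc] at ha
      simp only [connSeg, Set.mem_setOf_eq] at hb
      obtain ⟨ha1, ha2⟩ := ha
      obtain ⟨hb1, hb2⟩ := hb
      have hfc : c = e (e.symm c) := (e.apply_symm_apply c).symm
      rw [hb1, hfc] at ha2
      rw [ha1] at hb2
      have hne' : e.symm (S.f p) ≠ e.symm c := fun h => hne (by
        rw [← e.apply_symm_apply (S.f p), h, ← hfc])
      rcases hne'.lt_or_gt with h | h
      · have t1 := hgt (e.symm c) p h ha2.1 ha2.2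
        have t2 := hmono' _ _ h
        rcases Set.mem_uIcc.mp hb2 with ⟨_, hA2⟩ | ⟨_, hA2⟩ <;> linarith
      · have t1 := hlt (e.symm c) p h ha2.1 ha2.2
        have t2 := hmono' _ _ h
        rcases Set.mem_uIcc.mp hb2 with ⟨hA1, _⟩ | ⟨hA1, _⟩ <;> linarith
    · intro p q hpq
      rw [Set.disjoint_left]
      rintro a ha hb
      simp only [connSeg, Set.mem_setOf_eq] at ha hb
      exact hpq (congrArg S.f (S.x_inj (ha.1.symm.trans hb.1)))
  · rintro ⟨hinj, hpl⟩
    refine ⟨_, hinj, hpl, ?_⟩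
    intro a b hab
    simp only [Equiv.symm_apply_apply]
    exact hmono δ hδ (↑b + 1) b.isLt (↑a + 1) (Nat.succ_lt_succ hab)
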